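/- Let Γ ⊆ ℝ² be a Jordan curve and let C ⊆ ℝ² be the image of a simple curve (a continuous injective map defined on a nondegenerate closed interval), with endpoint set E (the images of the two endpoints of the interval). Then any family of congruent copies of C contained in Γ that are mutually disjoint apart from possibly their endpoints is finite: if G is a set of isometries of ℝ² such that g(C) ⊆ Γ for all g ∈ G and g(C) ∩ h(C) ⊆ g(E) ∪ h(E) whenever g, h ∈ G give distinct copies g(C) ≠ h(C), then the family {g(C) : g ∈ G} is finite. -/

import Mathlib

open Set Metric MeasureTheory
open scoped MeasureTheory

noncomputable section


/-- The Euclidean plane. -/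
abbrev E2 : Type := EuclideanSpace ℝ (Fin 2)

/-- A topological disc: a compact subset of the plane homeomorphic to the closed unit disc. -/
def TopDisc (D : Set E2) : Prop :=
  Nonempty (D ≃ₜ (Metric.closedBall (0 : E2) 1 : Set E2))

/-- A convex disc: a compact convex subset of the plane with nonempty interior. -/
def ConvexDisc (K : Set E2) : Prop :=
  IsCompact K ∧ Convex ℝ K ∧ (interior K).Nonempty

/-- Strict convexity: the boundary contains no line segment. -/
def StrictlyConvexDisc (K : Set E2) : Prop :=
  ConvexDisc K ∧
    ∀ x ∈ frontier K, ∀ y ∈ frontier K, x ≠ y → ¬ segment ℝ x y ⊆ frontier K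

/-- `L` is a supporting line of `K` at the boundary point `x`. -/
def IsSupportLine (K : Set E2) (x : E2) (L : Set E2) : Prop :=
  ∃ f : E2 →L[ℝ] ℝ, f ≠ 0 ∧ L = {y | f y = f x} ∧ ∀ y ∈ K, f y ≤ f x

/-- Smoothness of the boundary: a unique supporting line at every boundary point. -/
def SmoothBoundary (K : Set E2) : Prop :=
  ∀ x ∈ frontier K, ∃! L : Set E2, IsSupportLine K x L

/-- A tiling of `K`: finitely many topological discs covering `K` with pairwise
disjoint interiors. -/
def IsTilingOf (K : Set E2) {n : ℕ} (D : Fin n → Set E2) : Prop :=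
  (∀ i, TopDisc (D i)) ∧ (⋃ i, D i) = K ∧
    ∀ i j, i ≠ j → interior (D i) ∩ interior (D j) = ∅

/-- A tiling is monohedral if the tiles are pairwise congruent. -/
def Monohedral {n : ℕ} (D : Fin n → Set E2) : Prop :=
  ∀ i j, ∃ g : E2 ≃ᵃⁱ[ℝ] E2, g '' D i = D j

/-- A tiling is normal if the intersection of any two tiles is empty or connected. -/
def NormalTiling {n : ℕ} (D : Fin n → Set E2) : Prop :=
  ∀ i j, i ≠ j → (D i ∩ D j = ∅ ∨ IsConnected (D i ∩ D j))

/-- The boundary of `D` admits a closed-curve parametrization that is continuously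
differentiable except at finitely many parameter values. -/
def PiecewiseDiffBoundary (D : Set E2) : Prop :=
  ∃ (γ : ℝ → E2) (T : Finset ℝ),
    ContinuousOn γ (Set.Icc 0 1) ∧ γ 0 = γ 1 ∧
    Set.InjOn γ (Set.Ico 0 1) ∧ γ '' Set.Icc 0 1 = frontier D ∧
    ∀ t ∈ Set.Icc (0:ℝ) 1, t ∉ T → ContDiffAt ℝ 1 γ t

/-- An isometry of the plane is orientation-preserving if its linear part has
determinant `1`. -/
def OrientationPreserving (g : E2 ≃ᵃⁱ[ℝ] E2) : Prop :=
  LinearMap.det (g.linearIsometryEquiv.toLinearEquiv : E2 →ₗ[ℝ] E2) = 1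

/-- A rotation: an orientation-preserving isometry other than the identity that
has a fixed point. -/
def IsRotationIsom (g : E2 ≃ᵃⁱ[ℝ] E2) : Prop :=
  OrientationPreserving g ∧ g ≠ AffineIsometryEquiv.refl ℝ E2 ∧ ∃ x, g x = x

/-- A glide reflection: an orientation-reversing isometry with no fixed point. -/
def IsGlideReflection (g : E2 ≃ᵃⁱ[ℝ] E2) : Prop :=
  ¬ OrientationPreserving g ∧ ∀ x, g x ≠ x

/-- A line reflection: an orientation-reversing isometry whose fixed-point set is
a line. -/
def IsLineReflection (g : E2 ≃ᵃⁱ[ℝ] E2) : Prop :=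
  ¬ OrientationPreserving g ∧
    ∃ p v : E2, v ≠ 0 ∧ {x | g x = x} = {x | ∃ t : ℝ, x = p + t • v}

/-- A translation by a nonzero vector. -/
def IsTranslationIsom (g : E2 ≃ᵃⁱ[ℝ] E2) : Prop :=
  ∃ v : E2, v ≠ 0 ∧ ∀ x, g x = x + v

/-- `K` is centrally symmetric about some point `o`. -/
def CentrallySymmetric (K : Set E2) : Prop :=
  ∃ o : E2, ∀ x ∈ K, (2 : ℝ) • o - x ∈ K

/-- `K` is axially symmetric: some line reflection maps `K` onto itself. -/
def AxiallySymmetric (K : Set E2) : Prop :=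
  ∃ σ : E2 ≃ᵃⁱ[ℝ] E2, IsLineReflection σ ∧ σ '' K = K

/-- `A` is a (nondegenerate) simple arc: the image of a continuous injective map
on `[0,1]`. -/
def IsSimpleArc (A : Set E2) : Prop :=
  ∃ f : ℝ → E2, ContinuousOn f (Set.Icc 0 1) ∧ Set.InjOn f (Set.Icc 0 1) ∧
    f '' Set.Icc 0 1 = A

section Stmt8AuxSect
open Complex Real

namespace Stmt8Aux

lemma abs_exp_sub_exp (θ₁ θ₂ : ℝ) :
    ‖Complex.exp (θ₁ * I) - Complex.exp (θ₂ * I)‖ ≤ 2 * |θ₁ - θ₂| := by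
  have key : Complex.exp (θ₁ * I) - Complex.exp (θ₂ * I)
      = Complex.exp (θ₂ * I) * (Complex.exp (((θ₁ - θ₂ : ℝ)) * I) - 1) := by
    rw [mul_sub, ← Complex.exp_add, mul_one]
    push_cast
    ring_nf
  rw [key, norm_mul, Complex.norm_exp_ofReal_mul_I, one_mul]
  rcases le_or_gt (|θ₁ - θ₂|) 1 with h | h
  · have habs : ‖((θ₁ - θ₂ : ℝ) : ℂ) * I‖ = |θ₁ - θ₂| := by
      simp [norm_mul, ← Complex.ofReal_sub, Complex.norm_real, Complex.norm_I]
    have := Complex.norm_exp_sub_one_le (x := ((θ₁ - θ₂ : ℝ) : ℂ) * I) (by rw [habs]; exact h)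
    rwa [habs] at this
  · have h1 : ‖Complex.exp (((θ₁ - θ₂ : ℝ)) * I) - 1‖ ≤ 2 := by
      calc ‖Complex.exp (((θ₁ - θ₂ : ℝ)) * I) - 1‖
          ≤ ‖Complex.exp (((θ₁ - θ₂ : ℝ)) * I)‖ + ‖(1:ℂ)‖ := by
            simpa using norm_sub_le _ (1:ℂ)
        _ = 2 := by rw [Complex.norm_exp_ofReal_mul_I]; norm_num
    nlinarith

/-- The angle coordinate of `z` on the circle, cut at `w`. -/
def chi (w z : ℂ) : ℝ := Complex.arg (-(z / w))

lemma abs_aux {w z : ℂ} (hz : ‖z‖ = 1) (hw : ‖w‖ = 1) :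
    ‖-(z / w)‖ = 1 := by
  rw [norm_neg, norm_div, hz, hw, one_div_one]

lemma eq_of_chi {w z : ℂ} (hz : ‖z‖ = 1) (hw : ‖w‖ = 1) :
    z = -w * Complex.exp ((chi w z : ℝ) * I) := by
  have h := Complex.norm_mul_exp_arg_mul_I (-(z / w))
  rw [abs_aux hz hw] at h
  have hw0 : w ≠ 0 := by intro h0; rw [h0] at hw; simp at hw
  rw [Complex.ofReal_one, one_mul] at h
  rw [chi, h]
  field_simp

lemma chi_injOn {w z z' : ℂ} (hz : ‖z‖ = 1) (hz' : ‖z'‖ = 1)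
    (hw : ‖w‖ = 1) (h : chi w z = chi w z') : z = z' := by
  rw [eq_of_chi hz hw, eq_of_chi hz' hw, h]

lemma eq_w_of_chi_eq_pi {w z : ℂ} (hz : ‖z‖ = 1) (hw : ‖w‖ = 1)
    (h : chi w z = Real.pi) : z = w := by
  have := eq_of_chi hz hw
  rw [h] at this
  rw [this]
  rw [Complex.exp_pi_mul_I]
  ring

lemma chord_le (w z z' : ℂ) (hz : ‖z‖ = 1) (hz' : ‖z'‖ = 1)
    (hw : ‖w‖ = 1) : dist z z' ≤ 2 * |chi w z - chi w z'| := by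
  rw [Complex.dist_eq]
  calc ‖z - z'‖
      = ‖-w‖ * ‖Complex.exp ((chi w z : ℝ) * I)
          - Complex.exp ((chi w z' : ℝ) * I)‖ := by
        rw [← norm_mul, mul_sub, ← eq_of_chi hz hw, ← eq_of_chi hz' hw]
    _ ≤ 2 * |chi w z - chi w z'| := by
        rw [norm_neg, hw, one_mul]; exact abs_exp_sub_exp _ _



lemma mem_circle_iff {z : ℂ} : z ∈ Metric.sphere (0:ℂ) 1 ↔ ‖z‖ = 1 := by
  rw [mem_sphere_zero_iff_norm]

lemma arg_exp {θ : ℝ} (hθ : θ ∈ Set.Ioc (-π) π) :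
    Complex.arg (Complex.exp ((θ:ℂ) * I)) = θ := by
  rw [Complex.exp_mul_I]
  exact Complex.arg_cos_add_sin_mul_I hθ

lemma exp_arg_eq {z : ℂ} (hz : ‖z‖ = 1) :
    Complex.exp ((Complex.arg z : ℂ) * I) = z := by
  have h := Complex.norm_mul_exp_arg_mul_I z
  rwa [hz, Complex.ofReal_one, one_mul] at h

lemma exp_I_inj {t s : ℝ} (h : Complex.exp ((t:ℂ) * I) = Complex.exp ((s:ℂ) * I)) :
    ∃ n : ℤ, t = s + n * (2 * π) := by
  obtain ⟨n, hn⟩ := Complex.exp_eq_exp_iff_exists_int.mp h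
  refine ⟨n, ?_⟩
  have h2 : (t : ℂ) * I = ((s + (n : ℝ) * (2 * π) : ℝ) : ℂ) * I := by
    push_cast
    linear_combination hn
  have h3 := mul_right_cancel₀ Complex.I_ne_zero h2
  exact_mod_cast h3

lemma sphere_diff_eq {z0 : ℂ} (h0 : ‖z0‖ = 1) :
    Metric.sphere (0:ℂ) 1 \ {z0}
      = (fun t : ℝ => Complex.exp ((t:ℂ) * I)) '' Ioo (Complex.arg z0) (Complex.arg z0 + 2*π) := by
  ext z
  constructor
  · rintro ⟨hz, hz0⟩
    rw [mem_circle_iff] at hz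
    simp only [mem_singleton_iff] at hz0
    have hargne : Complex.arg z ≠ Complex.arg z0 := by
      intro h
      exact hz0 (by rw [← exp_arg_eq hz, h, exp_arg_eq h0])
    rcases lt_or_gt_of_ne hargne with h | h
    · refine ⟨Complex.arg z + 2*π, ⟨?_, by linarith⟩, ?_⟩
      · have := Complex.neg_pi_lt_arg z
        have := Complex.arg_le_pi z0
        linarith
      · have : Complex.exp (((Complex.arg z + 2*π : ℝ) : ℂ) * I)
            = Complex.exp ((Complex.arg z : ℂ) * I) * Complex.exp ((2*π : ℝ) * I) := by
          rw [← Complex.exp_add]; push_cast; ring_nf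
        simp only [this]
        have h2 : Complex.exp (((2*π : ℝ) : ℂ) * I) = 1 := by
          have := Complex.exp_int_mul_two_pi_mul_I 1
          push_cast at this ⊢
          rw [show ((2:ℂ)*π*I) = (1:ℤ)*(2*π*I) by push_cast; ring]
          exact_mod_cast Complex.exp_int_mul_two_pi_mul_I 1
        rw [h2, mul_one, exp_arg_eq hz]
    · refine ⟨Complex.arg z, ⟨h, ?_⟩, exp_arg_eq hz⟩
      have := Complex.arg_le_pi z
      have := Complex.neg_pi_lt_arg z0
      linarith
  · rintro ⟨t, ht, rfl⟩
    refine ⟨mem_circle_iff.mpr (Complex.norm_exp_ofReal_mul_I t), ?_⟩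
    simp only [mem_singleton_iff]
    intro hzz
    rw [← exp_arg_eq h0] at hzz
    obtain ⟨n, hn⟩ := exp_I_inj hzz
    obtain ⟨ht1, ht2⟩ := ht
    have hπ := Real.pi_pos
    rcases lt_trichotomy n 0 with h | h | h
    · have : (n : ℝ) ≤ -1 := by exact_mod_cast (by omega : n ≤ -1)
      nlinarith
    · rw [h] at hn; push_cast at hn; linarith
    · have : (1 : ℝ) ≤ (n : ℝ) := by exact_mod_cast h
      nlinarith

lemma sphere_diff_preconn {z0 : ℂ} (h0 : ‖z0‖ = 1) :
    IsPreconnected (Metric.sphere (0:ℂ) 1 \ {z0}) := by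
  rw [sphere_diff_eq h0]
  exact (isPreconnected_Ioo).image _
    (Complex.continuous_exp.comp ((Complex.continuous_ofReal).mul continuous_const)).continuousOn

lemma open_inter_sphere_infinite {W : Set ℂ} (hW : IsOpen W) {z : ℂ} (hzW : z ∈ W)
    (hz : ‖z‖ = 1) : (W ∩ Metric.sphere (0:ℂ) 1).Infinite := by
  set F : ℝ → ℂ := fun t => Complex.exp ((t:ℂ) * I) with hF
  have hFc : Continuous F :=
    Complex.continuous_exp.comp ((Complex.continuous_ofReal).mul continuous_const)
  have hFz : F (Complex.arg z) = z := exp_arg_eq hz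
  have hO : IsOpen (F ⁻¹' W) := hW.preimage hFc
  have hmem : Complex.arg z ∈ F ⁻¹' W := by simp [hFz, hzW]
  obtain ⟨η, hη, hball⟩ := Metric.isOpen_iff.mp hO _ hmem
  set η' := min η 1 with hη'
  have hη'0 : 0 < η' := lt_min hη one_pos
  have hsub : Ioo (Complex.arg z - η') (Complex.arg z + η') ⊆ F ⁻¹' W := by
    intro t ht
    apply hball
    rw [Metric.mem_ball, Real.dist_eq, abs_lt]
    constructor
    · linarith [ht.1, ht.2, min_le_left η 1]
    · linarith [ht.1, ht.2, min_le_left η 1]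
  have hinf : (Ioo (Complex.arg z - η') (Complex.arg z + η')).Infinite :=
    Set.Ioo_infinite (by linarith)
  have hinj : Set.InjOn F (Ioo (Complex.arg z - η') (Complex.arg z + η')) := by
    intro t ht s hs hts
    obtain ⟨n, hn⟩ := exp_I_inj hts
    have hπ := Real.pi_gt_three
    have hη'1 : η' ≤ 1 := min_le_right _ _
    rcases lt_trichotomy n 0 with h | h | h
    · have : (n : ℝ) ≤ -1 := by exact_mod_cast (by omega : n ≤ -1)
      have := ht.1; have := ht.2; have := hs.1; have := hs.2
      nlinarith
    · rw [h] at hn; push_cast at hn; linarith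
    · have : (1 : ℝ) ≤ (n : ℝ) := by exact_mod_cast h
      have := ht.1; have := ht.2; have := hs.1; have := hs.2
      nlinarith
  apply Set.Infinite.mono (s := F '' Ioo (Complex.arg z - η') (Complex.arg z + η'))
  · rintro x ⟨t, ht, rfl⟩
    exact ⟨hsub ht, mem_circle_iff.mpr (Complex.norm_exp_ofReal_mul_I t)⟩
  · exact hinf.image hinj

lemma mem_slit_of_arg_ne {z : ℂ} (h0 : z ≠ 0) (hπ : Complex.arg z ≠ π) :
    z ∈ Complex.slitPlane :=
  Complex.mem_slitPlane_iff_arg.mpr ⟨hπ, h0⟩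

lemma unit_ne_zero {z : ℂ} (hz : ‖z‖ = 1) : z ≠ 0 := by
  intro h; rw [h] at hz; simp at hz

lemma neg_div_mem_slit {w z : ℂ} (hz : ‖z‖ = 1) (hw : ‖w‖ = 1)
    (hzw : z ≠ w) : -(z / w) ∈ Complex.slitPlane := by
  apply mem_slit_of_arg_ne
  · exact neg_ne_zero.mpr (div_ne_zero (unit_ne_zero hz) (unit_ne_zero hw))
  · intro h
    exact hzw (eq_w_of_chi_eq_pi hz hw h)

lemma chi_continuousAt {w z : ℂ} (hz : ‖z‖ = 1) (hw : ‖w‖ = 1)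
    (hzw : z ≠ w) : ContinuousAt (chi w) z := by
  have hcont : Continuous (fun y : ℂ => -(y / w)) := (continuous_id.div_const w).neg
  have h2 : ContinuousAt (Complex.arg ∘ fun y : ℂ => -(y / w)) z :=
    ContinuousAt.comp (Complex.continuousAt_arg (neg_div_mem_slit hz hw hzw)) hcont.continuousAt
  exact h2

/-- The grid points on the circle. -/
def grid (N k : ℕ) : ℂ := Complex.exp (((k * (2 * π / N) : ℝ) : ℂ) * I)

lemma grid_abs (N k : ℕ) : ‖grid N k‖ = 1 :=
  Complex.norm_exp_ofReal_mul_I _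

lemma exists_grid (N : ℕ) (hN : 0 < N) (β u v : ℝ) (huv : 2 * π / N < v - u) :
    ∃ k : ℕ, k < N ∧ ∃ θ ∈ Ioo u v,
      grid N k * Complex.exp ((β : ℂ) * I) = Complex.exp ((θ : ℂ) * I) := by
  set δ := 2 * π / N with hδdef
  have hNR : (0:ℝ) < N := by exact_mod_cast hN
  have hδ : 0 < δ := by
    apply div_pos _ hNR
    have := Real.pi_pos; linarith
  set j : ℤ := ⌊(u - β) / δ⌋ + 1 with hj
  set θ := β + j * δ with hθdef
  have hθu : u < θ := by
    have h1 : (u - β) / δ < (j : ℝ) := by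
      rw [hj]; push_cast; exact Int.lt_floor_add_one _
    have := (div_lt_iff₀ hδ).mp h1
    rw [hθdef]; linarith
  have hθv : θ < v := by
    have h1 : ((j : ℝ) - 1) ≤ (u - β) / δ := by
      rw [hj]; push_cast; simp only [add_sub_cancel_right]; exact Int.floor_le _
    have h2 : ((j:ℝ) - 1) * δ ≤ u - β := (le_div_iff₀ hδ).mp h1
    rw [hθdef]; nlinarith
  set k : ℕ := (j % N).toNat with hk
  have hNZ : (N : ℤ) ≠ 0 := by exact_mod_cast hN.ne'
  have hknn : 0 ≤ j % (N : ℤ) := Int.emod_nonneg j hNZ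
  have hkval : (k : ℤ) = j % (N : ℤ) := Int.toNat_of_nonneg hknn
  have hkN : k < N := by
    have := Int.emod_lt_of_pos j (by exact_mod_cast hN : (0:ℤ) < N)
    omega
  refine ⟨k, hkN, θ, ⟨hθu, hθv⟩, ?_⟩
  set m : ℤ := j / N with hm
  have hreal : (k : ℝ) * δ + β = θ - (m : ℝ) * (2 * π) := by
    have hq : (k : ℝ) = (j : ℝ) - (N : ℝ) * (m : ℝ) := by
      have : (k : ℤ) = j - N * m := by rw [hkval, hm, Int.emod_def]
      exact_mod_cast this
    have hNδ : (N : ℝ) * δ = 2 * π := by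
      rw [hδdef]; field_simp
    rw [hθdef, hq]
    linear_combination (-(m:ℝ)) * hNδ
  rw [grid, ← Complex.exp_add]
  have h1 : ((k * (2 * π / N) : ℝ) : ℂ) * I + (β : ℂ) * I = (((k:ℝ) * δ + β : ℝ) : ℂ) * I := by
    push_cast [hδdef]; ring
  rw [h1, hreal]
  have h2 : (((θ - (m:ℝ) * (2*π) : ℝ)) : ℂ) * I = (θ : ℂ) * I + (-m : ℤ) * (2 * (π:ℂ) * I) := by
    push_cast; ring
  rw [h2, Complex.exp_add, Complex.exp_int_mul_two_pi_mul_I, mul_one]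

lemma arc_ne_sphere (q : ℝ → ℂ) (a b : ℝ) (hab : a < b) (hc : Continuous q)
    (hi : Set.InjOn q (Set.Icc a b)) (hs : q '' Set.Icc a b ⊆ Metric.sphere (0:ℂ) 1) :
    ∃ w, ‖w‖ = 1 ∧ w ∉ q '' Set.Icc a b := by
  by_contra hcon
  push_neg at hcon
  have hall : Metric.sphere (0:ℂ) 1 ⊆ q '' Set.Icc a b := by
    intro z hz
    exact hcon z (mem_circle_iff.mp hz)
  set m := (a + b) / 2 with hm
  have ham : a < m := by rw [hm]; linarith
  have hmb : m < b := by rw [hm]; linarith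
  have hmI : m ∈ Set.Icc a b := ⟨ham.le, hmb.le⟩
  have hqm : q m ∈ Metric.sphere (0:ℂ) 1 := hs ⟨m, hmI, rfl⟩
  set F1 := q '' Set.Icc a m with hF1
  set F2 := q '' Set.Icc m b with hF2
  have hF1c : IsClosed F1 := (isCompact_Icc.image hc).isClosed
  have hF2c : IsClosed F2 := (isCompact_Icc.image hc).isClosed
  have hF12 : q '' Set.Icc a b = F1 ∪ F2 := by
    rw [hF1, hF2, ← Set.image_union, Set.Icc_union_Icc_eq_Icc ham.le hmb.le]
  have hpre := sphere_diff_preconn (mem_circle_iff.mp hqm)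
  have hsub1 : Set.Icc a m ⊆ Set.Icc a b := Set.Icc_subset_Icc le_rfl hmb.le
  have hsub2 : Set.Icc m b ⊆ Set.Icc a b := Set.Icc_subset_Icc ham.le le_rfl
  have hcover : Metric.sphere (0:ℂ) 1 \ {q m} ⊆ F1ᶜ ∪ F2ᶜ := by
    rintro x ⟨hx, hxm⟩
    simp only [Set.mem_singleton_iff] at hxm
    by_contra hx12
    simp only [Set.mem_union, Set.mem_compl_iff, not_or, not_not] at hx12
    obtain ⟨⟨t1, ht1, hqt1⟩, ⟨t2, ht2, hqt2⟩⟩ := hx12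
    have : t1 = t2 := hi (hsub1 ht1) (hsub2 ht2) (by rw [hqt1, hqt2])
    have ht1m : t1 = m := le_antisymm ht1.2 (this ▸ ht2.1)
    exact hxm (by rw [← hqt1, ht1m])
  have hne1 : ((Metric.sphere (0:ℂ) 1 \ {q m}) ∩ F1ᶜ).Nonempty := by
    refine ⟨q b, ⟨⟨hs ⟨b, ⟨hab.le, le_rfl⟩, rfl⟩, ?_⟩, ?_⟩⟩
    · simp only [Set.mem_singleton_iff]
      intro h
      exact (ne_of_lt hmb) (hi ⟨hab.le, le_rfl⟩ hmI h).symm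
    · rintro ⟨t, ht, hqt⟩
      have : t = b := hi (hsub1 ht) ⟨hab.le, le_rfl⟩ hqt
      rw [this] at ht
      exact absurd ht.2 (not_le.mpr hmb)
  have hne2 : ((Metric.sphere (0:ℂ) 1 \ {q m}) ∩ F2ᶜ).Nonempty := by
    refine ⟨q a, ⟨⟨hs ⟨a, ⟨le_rfl, hab.le⟩, rfl⟩, ?_⟩, ?_⟩⟩
    · simp only [Set.mem_singleton_iff]
      intro h
      exact (ne_of_lt ham) (hi ⟨le_rfl, hab.le⟩ hmI h)
    · rintro ⟨t, ht, hqt⟩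
      have : t = a := hi (hsub2 ht) ⟨le_rfl, hab.le⟩ hqt
      rw [this] at ht
      exact absurd ht.1 (not_le.mpr ham)
  obtain ⟨x, hxs, hx1, hx2⟩ :=
    hpre F1ᶜ F2ᶜ hF1c.isOpen_compl hF2c.isOpen_compl hcover hne1 hne2
  have : x ∈ F1 ∪ F2 := by rw [← hF12]; exact hall hxs.1
  cases this with
  | inl h => exact hx1 h
  | inr h => exact hx2 h

lemma copy_claim (q : ℝ → ℂ) (a b : ℝ) (hab : a < b) (hq : Continuous q)
    (hqi : Set.InjOn q (Set.Icc a b)) (hqs : q '' Set.Icc a b ⊆ Metric.sphere (0:ℂ) 1)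
    (ε : ℝ) (hε : ε ≤ dist (q a) (q b)) (N : ℕ) (hN : 0 < N) (hN2 : 2 * π / N < ε / 2) :
    ∃ k : ℕ, k < N ∧ ∃ W : Set ℂ, IsOpen W ∧ grid N k ∈ W ∧
      W ∩ Metric.sphere (0:ℂ) 1 ⊆ q '' Set.Icc a b := by
  set K := q '' Set.Icc a b with hK
  have haI : a ∈ Set.Icc a b := ⟨le_rfl, hab.le⟩
  have hbI : b ∈ Set.Icc a b := ⟨hab.le, le_rfl⟩
  have hKabs : ∀ z ∈ K, ‖z‖ = 1 := fun z hz => mem_circle_iff.mp (hqs hz)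
  obtain ⟨w, hw, hwK⟩ := arc_ne_sphere q a b hab hq hqi hqs
  have hKchi : ∀ z ∈ K, chi w z ∈ Ioo (-π) π := by
    intro z hz
    refine ⟨Complex.neg_pi_lt_arg _, lt_of_le_of_ne (Complex.arg_le_pi _) ?_⟩
    intro h
    exact hwK ((eq_w_of_chi_eq_pi (hKabs z hz) hw h) ▸ hz)
  have hqaK : q a ∈ K := ⟨a, haI, rfl⟩
  have hqbK : q b ∈ K := ⟨b, hbI, rfl⟩
  set θ₁ := chi w (q a) with hθ₁
  set θ₂ := chi w (q b) with hθ₂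
  have hdist : ε ≤ 2 * |θ₁ - θ₂| :=
    le_trans hε (chord_le w (q a) (q b) (hKabs _ hqaK) (hKabs _ hqbK) hw)
  set u := min θ₁ θ₂ with hu
  set v := max θ₁ θ₂ with hv
  have huv : ε / 2 ≤ v - u := by
    rw [hu, hv, max_sub_min_eq_abs]
    linarith [abs_sub_comm θ₁ θ₂]
  obtain ⟨k, hkN, θ, hθmem, hexp⟩ :=
    exists_grid N hN (Complex.arg (-(1 / w))) u v (lt_of_lt_of_le hN2 huv)
  have hKpre : IsPreconnected K := (isPreconnected_Icc).image q hq.continuousOn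
  have hcontK : ContinuousOn (chi w) K := by
    intro z hz
    exact (chi_continuousAt (hKabs z hz) hw (fun h => hwK (h ▸ hz))).continuousWithinAt
  have hJ : IsPreconnected (chi w '' K) := hKpre.image _ hcontK
  have hθ1J : θ₁ ∈ chi w '' K := ⟨q a, hqaK, rfl⟩
  have hθ2J : θ₂ ∈ chi w '' K := ⟨q b, hqbK, rfl⟩
  have huJ : u ∈ chi w '' K := by
    rcases min_choice θ₁ θ₂ with h | h <;> rw [hu, h]
    exacts [hθ1J, hθ2J]
  have hvJ : v ∈ chi w '' K := by
    rcases max_choice θ₁ θ₂ with h | h <;> rw [hv, h]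
    exacts [hθ1J, hθ2J]
  have hIcc : Icc u v ⊆ chi w '' K := hJ.Icc_subset huJ hvJ
  have huπ : u ∈ Ioo (-π) π := by
    obtain ⟨z, hz, hze⟩ := huJ
    exact hze ▸ hKchi z hz
  have hvπ : v ∈ Ioo (-π) π := by
    obtain ⟨z, hz, hze⟩ := hvJ
    exact hze ▸ hKchi z hz
  have hθpi : θ ∈ Ioo (-π) π := ⟨lt_trans huπ.1 hθmem.1, lt_trans hθmem.2 hvπ.2⟩
  have hgw : -(grid N k / w) = Complex.exp ((θ : ℂ) * I) := by
    have habs1 : ‖-(1 / w)‖ = 1 := by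
      rw [norm_neg, norm_div, norm_one, hw, div_one]
    calc -(grid N k / w) = grid N k * (-(1 / w)) := by ring
      _ = grid N k * Complex.exp ((Complex.arg (-(1 / w)) : ℂ) * I) := by
          rw [exp_arg_eq habs1]
      _ = Complex.exp ((θ : ℂ) * I) := hexp
  have hargθ : Complex.arg (Complex.exp ((θ : ℂ) * I)) = θ := arg_exp ⟨hθpi.1, hθpi.2.le⟩
  have hchigrid : chi w (grid N k) = θ := by rw [chi, hgw, hargθ]
  set O := (fun z : ℂ => -(z / w)) ⁻¹' Complex.slitPlane with hO
  have hOopen : IsOpen O := Complex.isOpen_slitPlane.preimage ((continuous_id.div_const w).neg)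
  have hContO : ContinuousOn (chi w) O := by
    intro z hz
    have h2 : ContinuousAt (Complex.arg ∘ fun y : ℂ => -(y / w)) z :=
      ContinuousAt.comp (Complex.continuousAt_arg hz) ((continuous_id.div_const w).neg).continuousAt
    exact h2.continuousWithinAt
  refine ⟨k, hkN, O ∩ (chi w) ⁻¹' (Ioo u v),
    hContO.isOpen_inter_preimage hOopen isOpen_Ioo, ⟨?_, ?_⟩, ?_⟩
  · rw [hO, Set.mem_preimage, hgw]
    exact mem_slit_of_arg_ne (Complex.exp_ne_zero _) (by rw [hargθ]; exact ne_of_lt hθpi.2)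
  · rw [Set.mem_preimage, hchigrid]
    exact hθmem
  · rintro z' ⟨⟨hz'O, hz'chi⟩, hz'sph⟩
    have hz'abs := mem_circle_iff.mp hz'sph
    rw [Set.mem_preimage] at hz'chi
    obtain ⟨y, hyK, hy⟩ := hIcc (Ioo_subset_Icc_self hz'chi)
    have : z' = y := chi_injOn hz'abs (hKabs y hyK) hw hy.symm
    rw [this]
    exact hyK

end Stmt8Aux


end Stmt8AuxSect

/-- A Jordan curve contains only finitely many congruent copies of a
simple curve `C` that are mutually disjoint apart from possibly their endpoints. -/
theorem stmt8 (Γ : Set E2)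
    (hΓ : Nonempty (Γ ≃ₜ (Metric.sphere (0 : E2) 1 : Set E2)))
    (a b : ℝ) (hab : a < b) (f : ℝ → E2)
    (hf : ContinuousOn f (Set.Icc a b)) (hinj : Set.InjOn f (Set.Icc a b))
    (C E : Set E2) (hC : C = f '' Set.Icc a b) (hE : E = {f a, f b})
    (G : Set (E2 ≃ᵃⁱ[ℝ] E2))
    (hsub : ∀ g ∈ G, g '' C ⊆ Γ)
    (hdisj : ∀ g ∈ G, ∀ h ∈ G, g '' C ≠ h '' C →
      g '' C ∩ h '' C ⊆ g '' E ∪ h '' E) :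
    Set.Finite ((fun g : E2 ≃ᵃⁱ[ℝ] E2 => g '' C) '' G) := by
  classical
  have haI : a ∈ Set.Icc a b := ⟨le_rfl, hab.le⟩
  have hbI : b ∈ Set.Icc a b := ⟨hab.le, le_rfl⟩
  set d0 := dist (f a) (f b) with hd0def
  have hd0 : 0 < d0 := by
    rw [hd0def, dist_pos]
    intro h
    exact (ne_of_lt hab) (hinj haI hbI h)
  obtain ⟨e0⟩ := hΓ
  set li : ℂ ≃ₗᵢ[ℝ] E2 := Complex.isometryOfOrthonormal (EuclideanSpace.basisFun (Fin 2) ℝ)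
    with hli
  have himg : (li.symm.toHomeomorph) '' (Metric.sphere (0 : E2) 1)
      = (Metric.sphere (0 : ℂ) 1) := by
    rw [show ⇑(li.symm.toHomeomorph) = ⇑li.symm from rfl, li.symm.image_sphere, map_zero]
  set eSph : (Metric.sphere (0 : E2) 1 : Set E2) ≃ₜ (Metric.sphere (0 : ℂ) 1 : Set ℂ) :=
    (li.symm.toHomeomorph.image (Metric.sphere (0 : E2) 1)).trans (Homeomorph.setCongr himg)
    with heSph
  set Φ : Γ ≃ₜ (Metric.sphere (0 : ℂ) 1 : Set ℂ) := e0.trans eSph with hΦ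
  haveI hcs : CompactSpace (Metric.sphere (0 : ℂ) 1 : Set ℂ) :=
    isCompact_iff_compactSpace.mp (isCompact_sphere 0 1)
  have hUC : UniformContinuous (Φ.symm) :=
    CompactSpace.uniformContinuous_of_continuous Φ.symm.continuous
  obtain ⟨ε, hεpos, hεP⟩ := Metric.uniformContinuous_iff.mp hUC d0 hd0
  obtain ⟨N, hNgt⟩ := exists_nat_gt (4 * Real.pi / ε)
  have hπ := Real.pi_pos
  have hNpos : 0 < N := by
    by_contra hn
    push_neg at hn
    interval_cases N
    · simp at hNgt
      nlinarith [div_pos (by linarith : (0:ℝ) < 4 * Real.pi) hεpos]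
  have hNR : (0:ℝ) < N := by exact_mod_cast hNpos
  have hN2 : 2 * Real.pi / N < ε / 2 := by
    rw [div_lt_div_iff₀ hNR (by norm_num : (0:ℝ) < 2)]
    have h4 : 4 * Real.pi < ε * N := by
      have := (div_lt_iff₀ hεpos).mp hNgt
      linarith
    linarith
  set fe : ℝ → E2 := fun t => f ((Set.projIcc a b hab.le t) : ℝ) with hfe
  have hfeC : Continuous fe :=
    hf.comp_continuous (continuous_subtype_val.comp continuous_projIcc)
      (fun t => (Set.projIcc a b hab.le t).2)
  have hfeEq : ∀ t ∈ Set.Icc a b, fe t = f t := fun t ht => by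
    rw [hfe]
    simp [Set.projIcc_of_mem hab.le ht]
  have hfeMem : ∀ t, fe t ∈ C := fun t => by
    rw [hC]; exact ⟨_, (Set.projIcc a b hab.le t).2, rfl⟩
  have hEfin : E.Finite := by rw [hE]; exact (Set.finite_singleton _).insert _
  set KS : Set E2 → Set ℂ :=
    fun X => (fun x : Γ => ((Φ x : (Metric.sphere (0 : ℂ) 1 : Set ℂ)) : ℂ)) ''
      (Subtype.val ⁻¹' X) with hKS
  have hKSinj : Function.Injective (fun x : Γ => ((Φ x : (Metric.sphere (0:ℂ) 1 : Set ℂ)) : ℂ)) :=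
    fun x y h => Φ.injective (Subtype.val_injective h)
  have hKSinter : ∀ X Y : Set E2, KS X ∩ KS Y = KS (X ∩ Y) := by
    intro X Y
    rw [hKS]
    simp only
    rw [← Set.image_inter hKSinj, ← Set.preimage_inter]
  have hKSfin : ∀ X : Set E2, X.Finite → (KS X).Finite := fun X hX =>
    (hX.preimage (Set.injOn_of_injective Subtype.val_injective)).image _
  set FF := (fun g : E2 ≃ᵃⁱ[ℝ] E2 => g '' C) '' G with hFF
  have key : ∀ A ∈ FF, ∃ k : ℕ, k < N ∧ ∃ W : Set ℂ,
      IsOpen W ∧ Stmt8Aux.grid N k ∈ W ∧ W ∩ Metric.sphere (0:ℂ) 1 ⊆ KS A := by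
    rintro A ⟨g, hg, rfl⟩
    have hmem : ∀ t, g (fe t) ∈ Γ := fun t => hsub g hg ⟨fe t, hfeMem t, rfl⟩
    set r : ℝ → Γ := fun t => ⟨g (fe t), hmem t⟩ with hr
    have hrc : Continuous r := Continuous.subtype_mk (g.continuous.comp hfeC) _
    set q : ℝ → ℂ := fun t => ((Φ (r t) : (Metric.sphere (0:ℂ) 1 : Set ℂ)) : ℂ) with hq
    have hqc : Continuous q := continuous_subtype_val.comp (Φ.continuous.comp hrc)
    have hqi : Set.InjOn q (Set.Icc a b) := by
      intro t ht t' ht' h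
      have h2 : r t = r t' := Φ.injective (Subtype.val_injective h)
      have h3 : g (fe t) = g (fe t') := congrArg Subtype.val h2
      have h4 : fe t = fe t' := g.injective h3
      rw [hfeEq t ht, hfeEq t' ht'] at h4
      exact hinj ht ht' h4
    have hqs : q '' Set.Icc a b ⊆ Metric.sphere (0:ℂ) 1 := by
      rintro z ⟨t, ht, rfl⟩
      exact (Φ (r t)).2
    have hKeq : q '' Set.Icc a b = KS (g '' C) := by
      rw [hKS]
      simp only
      ext z
      constructor
      · rintro ⟨t, ht, rfl⟩
        exact ⟨r t, ⟨fe t, hfeMem t, rfl⟩, rfl⟩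
      · rintro ⟨x, hx, rfl⟩
        obtain ⟨c, hc, hgc⟩ := hx
        rw [hC] at hc
        obtain ⟨t, ht, rfl⟩ := hc
        refine ⟨t, ht, ?_⟩
        have hx2 : r t = x := Subtype.ext (by show g (fe t) = (x : E2); rw [hfeEq t ht]; exact hgc)
        show ((Φ (r t) : (Metric.sphere (0:ℂ) 1 : Set ℂ)) : ℂ) = _
        rw [hx2]
    have hd : dist (r a) (r b) = d0 := by
      rw [Subtype.dist_eq]
      show dist (g (fe a)) (g (fe b)) = d0
      rw [hfeEq a haI, hfeEq b hbI, g.dist_map]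
    have hε' : ε ≤ dist (q a) (q b) := by
      by_contra hlt
      push_neg at hlt
      have hgoal := hεP (a := Φ (r a)) (b := Φ (r b)) (by rw [Subtype.dist_eq]; exact hlt)
      rw [Φ.symm_apply_apply, Φ.symm_apply_apply, hd] at hgoal
      exact lt_irrefl _ hgoal
    obtain ⟨k, hk, W, hW, hgridW, hsubW⟩ :=
      Stmt8Aux.copy_claim q a b hab hqc hqi hqs ε hε' N hNpos hN2
    exact ⟨k, hk, W, hW, hgridW, hKeq ▸ hsubW⟩
  have hch : ∀ A : FF, ∃ k : ℕ, k < N ∧ ∃ W : Set ℂ,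
      IsOpen W ∧ Stmt8Aux.grid N k ∈ W ∧ W ∩ Metric.sphere (0:ℂ) 1 ⊆ KS A := fun A => key A A.2
  choose kf hkf Wf hWf hgWf hsWf using hch
  haveI : Finite FF := by
    apply Finite.of_injective (fun A => (⟨kf A, hkf A⟩ : Fin N))
    intro A B hAB
    by_contra hne
    have hkeq : kf A = kf B := by
      simpa using congrArg Fin.val hAB
    have hABne : (A : Set E2) ≠ (B : Set E2) := fun h => hne (Subtype.ext h)
    obtain ⟨g, hg, hgA⟩ := A.2
    obtain ⟨h, hh, hhB⟩ := B.2
    replace hgA : g '' C = (A : Set E2) := hgA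
    replace hhB : h '' C = (B : Set E2) := hhB
    have hdisjAB : (A : Set E2) ∩ (B : Set E2) ⊆ g '' E ∪ h '' E := by
      rw [← hgA, ← hhB]
      exact hdisj g hg h hh (by rw [hgA, hhB]; exact hABne)
    have hfinAB : ((A : Set E2) ∩ (B : Set E2)).Finite :=
      ((hEfin.image g).union (hEfin.image h)).subset hdisjAB
    have hWAB : IsOpen (Wf A ∩ Wf B) := (hWf A).inter (hWf B)
    have hzW : Stmt8Aux.grid N (kf A) ∈ Wf A ∩ Wf B := ⟨hgWf A, hkeq ▸ hgWf B⟩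
    have hinf := Stmt8Aux.open_inter_sphere_infinite hWAB hzW (Stmt8Aux.grid_abs N (kf A))
    have hsub2 : (Wf A ∩ Wf B) ∩ Metric.sphere (0:ℂ) 1 ⊆ KS ((A : Set E2) ∩ (B : Set E2)) := by
      intro z hz
      rw [← hKSinter]
      exact ⟨hsWf A ⟨hz.1.1, hz.2⟩, hsWf B ⟨hz.1.2, hz.2⟩⟩
    exact (hinf.mono hsub2) (hKSfin _ hfinAB)
  exact Set.toFinite FF
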